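/- arXiv:2507.22757 — 2 statements merged into one kernel-verified Lean document; each statement's English description precedes it below -/
import Mathlib

section
/- For any integer q > 1 and any u ∈ H^2(0,T;L^q(Ω)) with u(0)=0, u_t(0)=0, and any ε > 0, one has ∫_0^T e^{-t/ε} ‖u(t)‖_{L^q(Ω)}^q dt ≤ (T^{2q}/(2q^2)) ∫_0^T e^{-t/ε} ‖u_tt(t)‖_{L^q(Ω)}^q dt. -/
open MeasureTheory Real

lemma jensen_pow_aux {q : ℕ} (hq : 1 ≤ q) {s : ℝ} (hs : 0 < s) {f : ℝ → ℝ}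
    (hf0 : ∀ x ∈ Set.Ioc (0:ℝ) s, 0 ≤ f x)
    (hfi : IntegrableOn f (Set.Ioc (0:ℝ) s))
    (hfqi : IntegrableOn (fun x => f x ^ q) (Set.Ioc (0:ℝ) s)) :
    (∫ x in (0:ℝ)..s, f x) ^ q ≤ s ^ (q-1) * ∫ x in (0:ℝ)..s, f x ^ q := by
  set μ := volume.restrict (Set.Ioc (0:ℝ) s) with hμ
  have hμuniv : μ Set.univ = ENNReal.ofReal s := by
    simp [hμ, Measure.restrict_apply, Real.volume_Ioc, hs.le]
  haveI : IsFiniteMeasure μ := ⟨by rw [hμuniv]; exact ENNReal.ofReal_lt_top⟩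
  haveI : NeZero μ := ⟨fun h => by
    rw [h] at hμuniv
    simp only [Measure.coe_zero, Pi.zero_apply] at hμuniv
    exact (ENNReal.ofReal_pos.2 hs).ne' hμuniv.symm⟩
  have hfs : ∀ᵐ x ∂μ, f x ∈ Set.Ici (0:ℝ) := by
    rw [hμ]
    exact (ae_restrict_iff' measurableSet_Ioc).2 (Filter.Eventually.of_forall hf0)
  have h := (convexOn_pow q).map_average_le (continuous_pow q).continuousOn isClosed_Ici
    hfs hfi hfqi
  rw [average_eq, average_eq, measureReal_def, hμuniv, ENNReal.toReal_ofReal hs.le, smul_eq_mul, smul_eq_mul] at h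
  have hA : ∫ x in (0:ℝ)..s, f x = ∫ x, f x ∂μ := intervalIntegral.integral_of_le hs.le
  have hB : ∫ x in (0:ℝ)..s, f x ^ q = ∫ x, f x ^ q ∂μ := intervalIntegral.integral_of_le hs.le
  rw [hA, hB]
  have hsq : s ^ q = s ^ (q-1) * s := by rw [← pow_succ, Nat.sub_add_cancel hq]
  calc (∫ x, f x ∂μ) ^ q = s ^ q * (s⁻¹ * ∫ x, f x ∂μ) ^ q := by
        rw [mul_pow, ← mul_assoc, ← mul_pow, mul_inv_cancel₀ hs.ne', one_pow, one_mul]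
    _ ≤ s ^ q * (s⁻¹ * ∫ x, f x ^ q ∂μ) := by
        exact mul_le_mul_of_nonneg_left h (pow_nonneg hs.le q)
    _ = s ^ (q-1) * ∫ x, f x ^ q ∂μ := by
        rw [hsq]; field_simp

lemma le_one_add_pow {x : ℝ} (hx : 0 ≤ x) {q : ℕ} (hq : 1 ≤ q) : x ≤ 1 + x ^ q := by
  rcases le_total x 1 with h | h
  · nlinarith [pow_nonneg hx q]
  · calc x = x ^ 1 := (pow_one x).symm
      _ ≤ x ^ q := pow_le_pow_right₀ h hq
      _ ≤ 1 + x ^ q := by linarith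

/-- weighted Poincaré-type inequality
`∫₀ᵀ e^{-t/ε}‖u(t)‖^q dt ≤ (T^{2q}/(2q²)) ∫₀ᵀ e^{-t/ε}‖u_tt(t)‖^q dt`
for `u ∈ H²(0,T;L^q(Ω))` with `u(0)=0`, `u_t(0)=0`, and `ε > 0`. -/
theorem stmt1
    {X : Type*} [NormedAddCommGroup X] [NormedSpace ℝ X] [CompleteSpace X]
    (T ε : ℝ) (hT : 0 < T) (hε : 0 < ε) (q : ℕ) (hq : 1 < q)
    (u u' u'' : ℝ → X)
    (hu' : ∀ t ∈ Set.Icc (0:ℝ) T, HasDerivAt u (u' t) t)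
    (hu'' : ∀ t ∈ Set.Icc (0:ℝ) T, HasDerivAt u' (u'' t) t)
    (hu0 : u 0 = 0) (hu'0 : u' 0 = 0)
    (hint : IntervalIntegrable (fun t => exp (-t/ε) * ‖u'' t‖ ^ q) volume 0 T)
    (hintu : IntervalIntegrable (fun t => exp (-t/ε) * ‖u t‖ ^ q) volume 0 T)
    (hftc : ∀ t ∈ Set.Icc (0:ℝ) T,
      u t = ∫ s in (0:ℝ)..t, ∫ r in (0:ℝ)..s, u'' r) :
    (∫ t in (0:ℝ)..T, exp (-t/ε) * ‖u t‖ ^ q)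
      ≤ T ^ (2 * q) / (2 * (q : ℝ) ^ 2) *
        ∫ t in (0:ℝ)..T, exp (-t/ε) * ‖u'' t‖ ^ q := by
  have hq1 : 1 ≤ q := hq.le
  have hqR : (0:ℝ) < q := by exact_mod_cast (by omega : 0 < q)
  set J : ℝ := ∫ r in (0:ℝ)..T, exp (-r/ε) * ‖u'' r‖ ^ q with hJ_def
  set w : ℝ → X := fun s => ∫ r in (0:ℝ)..s, u'' r with hw_def
  set W : ℝ → ℝ := fun s => ∫ r in (0:ℝ)..s, ‖u'' r‖ with hW_def
  set G : ℝ → ℝ := fun s => ∫ r in (0:ℝ)..s, ‖u'' r‖ ^ q with hG_def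
  have hIoc : Set.uIoc (0:ℝ) T = Set.Ioc 0 T := Set.uIoc_of_le hT.le
  have hIcc : Set.uIcc (0:ℝ) T = Set.Icc 0 T := Set.uIcc_of_le hT.le
  -- measurability of u''
  have hdm : AEStronglyMeasurable u'' (volume.restrict (Set.Ioc (0:ℝ) T)) := by
    have hae : ∀ᵐ x ∂(volume.restrict (Set.Ioc (0:ℝ) T)), deriv u' x = u'' x :=
      (ae_restrict_iff' measurableSet_Ioc).2 (Filter.Eventually.of_forall fun x hx =>
        (hu'' x ⟨hx.1.le, hx.2⟩).deriv)
    exact ((stronglyMeasurable_deriv u').aestronglyMeasurable).congr hae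
  -- ‖u''‖^q interval integrable
  have hGq : IntervalIntegrable (fun r => ‖u'' r‖ ^ q) volume 0 T := by
    have h1 : IntervalIntegrable (fun r => exp (r/ε) * (exp (-r/ε) * ‖u'' r‖ ^ q)) volume 0 T :=
      hint.continuousOn_mul ((continuous_exp.comp (continuous_id.div_const ε)).continuousOn)
    have h2 : (fun r => exp (r/ε) * (exp (-r/ε) * ‖u'' r‖ ^ q))
        = fun r => ‖u'' r‖ ^ q := by
      funext r
      rw [← mul_assoc, ← Real.exp_add, show r/ε + -r/ε = 0 by ring, Real.exp_zero, one_mul]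
    rwa [h2] at h1
  -- ‖u''‖ interval integrable
  have hgq1 : IntervalIntegrable (fun r => 1 + ‖u'' r‖ ^ q) volume 0 T :=
    (intervalIntegrable_const (c := (1:ℝ))).add hGq
  have hg1 : IntervalIntegrable (fun r => ‖u'' r‖) volume 0 T := by
    apply hgq1.mono_fun' (by rw [hIoc]; exact hdm.norm)
    refine Filter.Eventually.of_forall fun x => ?_
    simp only [Real.norm_eq_abs, abs_of_nonneg (norm_nonneg _)]
    exact le_one_add_pow (norm_nonneg _) hq1
  -- u'' Bochner interval integrable
  have hu2 : IntervalIntegrable u'' volume 0 T := by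
    apply hg1.mono_fun (by rw [hIoc]; exact hdm)
    exact Filter.Eventually.of_forall fun x => le_of_eq (by
      simp [Real.norm_eq_abs, abs_of_nonneg (norm_nonneg _)])
  -- continuity of primitives on [0,T]
  have hwc : ContinuousOn w (Set.Icc 0 T) := by
    rw [← hIcc]
    refine intervalIntegral.continuousOn_primitive_interval ?_
    rw [hIcc]
    exact (integrableOn_Icc_iff_integrableOn_Ioc (by simp)).2 hu2.1
  have hWc : ContinuousOn W (Set.Icc 0 T) := by
    rw [← hIcc]
    refine intervalIntegral.continuousOn_primitive_interval ?_
    rw [hIcc]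
    exact (integrableOn_Icc_iff_integrableOn_Ioc (by simp)).2 hg1.1
  -- key pointwise bound
  have hkey : ∀ t ∈ Set.Icc (0:ℝ) T,
      exp (-t/ε) * ‖u t‖ ^ q ≤ t ^ (2*q-1) / q * J := by
    intro t ht
    rcases eq_or_lt_of_le ht.1 with h0 | h0
    · rw [← h0, hu0]
      simp [zero_pow (by omega : q ≠ 0), zero_pow (by omega : 2*q-1 ≠ 0)]
    · have htT : t ≤ T := ht.2
      have huIt : Set.uIcc (0:ℝ) t = Set.Icc 0 t := Set.uIcc_of_le h0.le
      have hsub : Set.uIcc (0:ℝ) t ⊆ Set.uIcc 0 T := by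
        rw [huIt, hIcc]; exact Set.Icc_subset_Icc le_rfl htT
      have hsubc : Set.Icc (0:ℝ) t ⊆ Set.Icc 0 T := Set.Icc_subset_Icc le_rfl htT
      have hGqt := hGq.mono_set hsub
      have hWic : IntervalIntegrable W volume 0 t :=
        ContinuousOn.intervalIntegrable (by rw [huIt]; exact hWc.mono hsubc)
      have hvic : IntervalIntegrable (fun s => ‖w s‖) volume 0 t :=
        ContinuousOn.intervalIntegrable (by rw [huIt]; exact (hwc.mono hsubc).norm)
      -- step a: norm bound by double scalar integral
      have hub : ‖u t‖ ≤ ∫ s in (0:ℝ)..t, W s := by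
        rw [hftc t ht]
        refine (intervalIntegral.norm_integral_le_integral_norm h0.le).trans ?_
        refine intervalIntegral.integral_mono_on h0.le hvic hWic fun s hs => ?_
        exact intervalIntegral.norm_integral_le_integral_norm hs.1
      -- step b: outer Jensen
      have hWq_ic : IntervalIntegrable (fun s => W s ^ q) volume 0 t :=
        ContinuousOn.intervalIntegrable (by rw [huIt]; exact (hWc.mono hsubc).pow q)
      have jo : (∫ s in (0:ℝ)..t, W s) ^ q ≤ t ^ (q-1) * ∫ s in (0:ℝ)..t, W s ^ q :=
        jensen_pow_aux hq1 h0
          (fun s hs => intervalIntegral.integral_nonneg hs.1.le fun r _ => norm_nonneg _)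
          hWic.1 hWq_ic.1
      -- step c: inner Jensen + monotonicity
      have hGt0 : 0 ≤ G t :=
        intervalIntegral.integral_nonneg h0.le fun r _ => pow_nonneg (norm_nonneg _) q
      have hinner : ∀ s ∈ Set.Icc (0:ℝ) t, W s ^ q ≤ s ^ (q-1) * G t := by
        intro s hs
        rcases eq_or_lt_of_le hs.1 with h0s | h0s
        · rw [← h0s]
          simp only [hW_def, intervalIntegral.integral_same]
          simp [zero_pow (by omega : q ≠ 0), zero_pow (by omega : q-1 ≠ 0)]
        · have hst : s ≤ t := hs.2
          have hsubs : Set.uIcc (0:ℝ) s ⊆ Set.uIcc 0 T := by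
            rw [Set.uIcc_of_le h0s.le, hIcc]
            exact Set.Icc_subset_Icc le_rfl (hst.trans htT)
          have hji := jensen_pow_aux hq1 h0s
            (fun r _ => norm_nonneg (u'' r)) (hg1.mono_set hsubs).1 (hGq.mono_set hsubs).1
          have hGle : G s ≤ G t := by
            refine intervalIntegral.integral_mono_interval le_rfl h0s.le hst ?_ hGqt
            exact Filter.Eventually.of_forall fun r => pow_nonneg (norm_nonneg _) q
          exact hji.trans (mul_le_mul_of_nonneg_left hGle (pow_nonneg hs.1 _))
      -- step e: integrate inner bound
      have he : ∫ s in (0:ℝ)..t, W s ^ q ≤ t ^ q / q * G t := by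
        have h1 : ∫ s in (0:ℝ)..t, W s ^ q ≤ ∫ s in (0:ℝ)..t, s ^ (q-1) * G t := by
          refine intervalIntegral.integral_mono_on h0.le hWq_ic ?_ hinner
          exact (Continuous.intervalIntegrable ((continuous_pow _).mul continuous_const) 0 t)
        have h2 : ∫ s in (0:ℝ)..t, s ^ (q-1) * G t = t ^ q / q * G t := by
          rw [intervalIntegral.integral_mul_const, integral_pow]
          have hc : ((q-1:ℕ):ℝ) + 1 = (q:ℝ) := by
            rw [Nat.cast_sub hq1]; ring
          rw [show (q-1) + 1 = q from by omega, hc, zero_pow (by omega : q ≠ 0)]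
          ring
        linarith [h1, h2.le]
      -- step f: combine to bound ‖u t‖^q
      have hf : ‖u t‖ ^ q ≤ t ^ (2*q-1) / q * G t := by
        have hpow : t ^ (q-1) * t ^ q = t ^ (2*q-1) := by
          rw [← pow_add]; congr 1; omega
        calc ‖u t‖ ^ q ≤ (∫ s in (0:ℝ)..t, W s) ^ q := pow_le_pow_left₀ (norm_nonneg _) hub q
          _ ≤ t ^ (q-1) * ∫ s in (0:ℝ)..t, W s ^ q := jo
          _ ≤ t ^ (q-1) * (t ^ q / q * G t) :=
              mul_le_mul_of_nonneg_left he (pow_nonneg h0.le _)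
          _ = t ^ (2*q-1) / q * G t := by
              rw [← hpow]; ring
      -- step g: weight transfer
      have hwt : exp (-t/ε) * G t ≤ J := by
        have h1 : exp (-t/ε) * G t = ∫ r in (0:ℝ)..t, exp (-t/ε) * ‖u'' r‖ ^ q := by
          rw [hG_def, ← intervalIntegral.integral_const_mul]
        rw [h1]
        have h2 : (∫ r in (0:ℝ)..t, exp (-t/ε) * ‖u'' r‖ ^ q)
            ≤ ∫ r in (0:ℝ)..t, exp (-r/ε) * ‖u'' r‖ ^ q := by
          refine intervalIntegral.integral_mono_on h0.le (hGqt.const_mul _)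
            (hint.mono_set hsub) fun r hr => ?_
          refine mul_le_mul_of_nonneg_right ?_ (pow_nonneg (norm_nonneg _) q)
          exact exp_le_exp.2 ((div_le_div_iff_of_pos_right hε).2 (by linarith [hr.2]))
        refine h2.trans ?_
        refine intervalIntegral.integral_mono_interval le_rfl h0.le htT ?_ hint
        exact Filter.Eventually.of_forall fun r => by positivity
      -- combine
      calc exp (-t/ε) * ‖u t‖ ^ q ≤ exp (-t/ε) * (t ^ (2*q-1) / q * G t) :=
            mul_le_mul_of_nonneg_left hf (exp_pos _).le
        _ = t ^ (2*q-1) / q * (exp (-t/ε) * G t) := by ring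
        _ ≤ t ^ (2*q-1) / q * J := by
            refine mul_le_mul_of_nonneg_left hwt ?_
            positivity
  -- final integration
  have hfin : (∫ t in (0:ℝ)..T, exp (-t/ε) * ‖u t‖ ^ q)
      ≤ ∫ t in (0:ℝ)..T, t ^ (2*q-1) / q * J :=
    intervalIntegral.integral_mono_on hT.le hintu
      (Continuous.intervalIntegrable (((continuous_pow _).div_const _).mul continuous_const) 0 T)
      hkey
  refine hfin.trans ?_
  have hc2 : ((2*q-1:ℕ):ℝ) + 1 = 2*(q:ℝ) := by
    rw [Nat.cast_sub (by omega : 1 ≤ 2*q)]; push_cast; ring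
  have h3 : ∫ t in (0:ℝ)..T, t ^ (2*q-1) / q * J = T ^ (2*q) / (2*(q:ℝ)^2) * J := by
    have : (fun t : ℝ => t ^ (2*q-1) / q * J) = fun t : ℝ => t ^ (2*q-1) * (J / q) := by
      funext t; ring
    rw [this, intervalIntegral.integral_mul_const, integral_pow,
      show (2*q-1) + 1 = 2*q from by omega, hc2]
    rw [zero_pow (by omega : 2*q ≠ 0), sub_zero]
    ring
  rw [h3]
end

section
/- For ε > 0 and functions u ∈ H^2(0,T;L^2(Ω)) with u(0)=0, u_t(0)=0: ∫_0^T e^{-t/ε} ‖u(t)‖_{L^2(Ω)}^2 dt ≤ (T^4/8) ∫_0^T e^{-t/ε} ‖u_tt(t)‖_{L^2(Ω)}^2 dt. In particular the exponentially weighted H^2-seminorm ‖u_tt‖_{L^2_ε(L^2)} defines a norm on the subspace of H^2(0,T;L^2(Ω)) with zero initial position and velocity. -/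
open MeasureTheory Real

lemma aux_cs {x C1 C2 : ℝ} (hC1 : 0 ≤ C1) (hC2 : 0 ≤ C2)
    (h : ∀ a > (0:ℝ), x ≤ (a * C1 + C2 / a) / 2) : x ≤ Real.sqrt (C1 * C2) := by
  rcases eq_or_lt_of_le hC1 with h1 | h1
  · have hx : x ≤ 0 := by
      refine le_of_forall_pos_le_add fun δ hδ => ?_
      rcases eq_or_lt_of_le hC2 with h2 | h2
      · have := h 1 one_pos; rw [← h1, ← h2] at this; simp at this; linarith
      · have := h (C2 / δ) (by positivity)
        rw [← h1] at this
        have h3 : C2 / (C2 / δ) = δ := by field_simp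
        rw [mul_zero, zero_add, h3] at this
        linarith
    exact hx.trans (Real.sqrt_nonneg _)
  · rcases eq_or_lt_of_le hC2 with h2 | h2
    · have hx : x ≤ 0 := by
        refine le_of_forall_pos_le_add fun δ hδ => ?_
        have := h (2 * δ / C1) (by positivity)
        rw [← h2] at this
        have h3 : 2 * δ / C1 * C1 = 2 * δ := by field_simp
        rw [h3] at this
        simp at this
        linarith
      exact hx.trans (Real.sqrt_nonneg _)
    · have ha : (0:ℝ) < Real.sqrt (C2 / C1) := Real.sqrt_pos.mpr (by positivity)
      have key := h _ ha
      have hs : Real.sqrt (C2 / C1) * C1 = Real.sqrt (C1 * C2) := by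
        rw [← Real.sqrt_sq h1.le, ← Real.sqrt_mul (by positivity)]
        congr 1; field_simp; simp only [Real.sqrt_sq h1.le]
      have hs2 : C2 / Real.sqrt (C2 / C1) = Real.sqrt (C1 * C2) := by
        rw [eq_comm, eq_div_iff ha.ne', ← Real.sqrt_mul (by positivity),
          ← Real.sqrt_sq h2.le]
        congr 1; field_simp; simp only [Real.sqrt_sq h2.le]
      rw [hs, hs2] at key
      linarith

lemma integral_sqrt'' {t : ℝ} (ht : 0 ≤ t) :
    (∫ s in (0:ℝ)..t, Real.sqrt s) = 2/3 * (t * Real.sqrt t) := by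
  rcases eq_or_lt_of_le ht with rfl | ht'
  · simp
  · simp_rw [Real.sqrt_eq_rpow]
    rw [integral_rpow (Or.inl (by norm_num))]
    rw [Real.zero_rpow (by norm_num)]
    have h1 : t ^ ((1:ℝ)/2 + 1) = t * t ^ ((1:ℝ)/2) := by
      rw [Real.rpow_add ht', Real.rpow_one]; ring
    rw [h1]; ring

/-- for `ε > 0` and `u ∈ H²(0,T;L²(Ω))` with `u(0)=0`, `u_t(0)=0`:
`∫₀ᵀ e^{-t/ε}‖u(t)‖² dt ≤ (T⁴/8) ∫₀ᵀ e^{-t/ε}‖u_tt(t)‖² dt`; in particular the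
weighted `H²`-seminorm `‖u_tt‖_{L²_ε(L²)}` is a norm on the subspace with zero
initial position and velocity (i.e. if it vanishes, then `u ≡ 0` on `[0,T]`). -/
theorem stmt2
    {X : Type*} [NormedAddCommGroup X] [NormedSpace ℝ X] [CompleteSpace X]
    (T ε : ℝ) (hT : 0 < T) (hε : 0 < ε)
    (u u' u'' : ℝ → X)
    (hu' : ∀ t ∈ Set.Icc (0:ℝ) T, HasDerivAt u (u' t) t)
    (hu'' : ∀ t ∈ Set.Icc (0:ℝ) T, HasDerivAt u' (u'' t) t)
    (hu0 : u 0 = 0) (hu'0 : u' 0 = 0)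
    (hint : IntervalIntegrable (fun t => exp (-t/ε) * ‖u'' t‖ ^ 2) volume 0 T)
    (hintu : IntervalIntegrable (fun t => exp (-t/ε) * ‖u t‖ ^ 2) volume 0 T)
    (hftc : ∀ t ∈ Set.Icc (0:ℝ) T,
      u t = ∫ s in (0:ℝ)..t, ∫ r in (0:ℝ)..s, u'' r) :
    ((∫ t in (0:ℝ)..T, exp (-t/ε) * ‖u t‖ ^ 2)
      ≤ T ^ 4 / 8 * ∫ t in (0:ℝ)..T, exp (-t/ε) * ‖u'' t‖ ^ 2)
    ∧ ((∫ t in (0:ℝ)..T, exp (-t/ε) * ‖u'' t‖ ^ 2) = 0 →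
        ∀ t ∈ Set.Icc (0:ℝ) T, u t = 0) := by
  set I := ∫ t in (0:ℝ)..T, exp (-t/ε) * ‖u'' t‖ ^ 2 with hIdef
  have hInn : 0 ≤ I :=
    intervalIntegral.integral_nonneg hT.le fun t _ => by positivity
  -- measurability of u''
  have hmeas : AEStronglyMeasurable u'' (volume.restrict (Set.uIoc (0:ℝ) T)) := by
    refine (stronglyMeasurable_deriv u').aestronglyMeasurable.congr ?_
    refine (ae_restrict_iff' measurableSet_uIoc).mpr (ae_of_all _ fun r hr => ?_)
    have hr' : r ∈ Set.Icc (0:ℝ) T := by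
      rw [Set.uIoc_of_le hT.le] at hr; exact ⟨hr.1.le, hr.2⟩
    exact (hu'' r hr').deriv
  have hdomc : Continuous fun r : ℝ => exp (r/ε) :=
    Real.continuous_exp.comp (continuous_id.div_const ε)
  -- pointwise AM-GM bound
  have hptbnd : ∀ a : ℝ, 0 < a → ∀ r : ℝ,
      ‖u'' r‖ ≤ (a * exp (r/ε) + (exp (-r/ε) * ‖u'' r‖ ^ 2) / a) / 2 := by
    intro a ha r
    have hE : 0 < exp (r/ε) := exp_pos _
    have hEn : exp (-r/ε) * exp (r/ε) = 1 := by
      rw [← Real.exp_add]; ring_nf; exact Real.exp_zero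
    have hN : 0 ≤ ‖u'' r‖ := norm_nonneg _
    have hEn' : exp (-r/ε) = 1 / exp (r/ε) := eq_one_div_of_mul_eq_one_left hEn
    rw [hEn', le_div_iff₀ (by norm_num : (0:ℝ) < 2), ← sub_nonneg]
    have hid : a * exp (r/ε) + 1 / exp (r/ε) * ‖u'' r‖ ^ 2 / a - ‖u'' r‖ * 2
        = (a * exp (r/ε) - ‖u'' r‖) ^ 2 / (a * exp (r/ε)) := by
      field_simp; ring
    rw [hid]; positivity
  have hu''int : IntervalIntegrable u'' volume 0 T := by
    refine ((hdomc.intervalIntegrable 0 T).add hint |>.div_const 2).mono_fun hmeas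
      (ae_of_all _ fun r => ?_)
    have h1 := hptbnd 1 one_pos r
    simp only [one_mul, div_one] at h1
    show ‖u'' r‖ ≤ ‖(exp (r/ε) + exp (-r/ε) * ‖u'' r‖ ^ 2) / 2‖
    rw [Real.norm_of_nonneg (by positivity)]
    exact h1
  have hnint : IntervalIntegrable (fun r => ‖u'' r‖) volume 0 T := hu''int.norm
  have hsub : ∀ s ∈ Set.Icc (0:ℝ) T, Set.uIcc (0:ℝ) s ⊆ Set.uIcc (0:ℝ) T := by
    intro s hs
    rw [Set.uIcc_of_le hs.1, Set.uIcc_of_le hT.le]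
    exact Set.Icc_subset_Icc le_rfl hs.2
  -- Step A
  have stepA : ∀ t ∈ Set.Icc (0:ℝ) T, ∀ s ∈ Set.Icc (0:ℝ) t,
      (∫ r in (0:ℝ)..s, ‖u'' r‖) ≤ Real.sqrt ((s * exp (t/ε)) * I) := by
    intro t ht s hs
    have hsT : s ∈ Set.Icc (0:ℝ) T := ⟨hs.1, hs.2.trans ht.2⟩
    refine aux_cs (mul_nonneg hs.1 (exp_pos _).le) hInn fun a ha => ?_
    have hgint2 : IntervalIntegrable (fun r => exp (-r/ε) * ‖u'' r‖ ^ 2) volume 0 s :=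
      hint.mono_set (hsub s hsT)
    have hgint : IntervalIntegrable
        (fun r => (a * exp (r/ε) + (exp (-r/ε) * ‖u'' r‖ ^ 2) / a) / 2) volume 0 s :=
      (((hdomc.intervalIntegrable 0 s).const_mul a).add (hgint2.div_const a)).div_const 2
    have h1 : (∫ r in (0:ℝ)..s, ‖u'' r‖)
        ≤ ∫ r in (0:ℝ)..s, (a * exp (r/ε) + (exp (-r/ε) * ‖u'' r‖ ^ 2) / a) / 2 :=
      intervalIntegral.integral_mono_on hs.1 (hnint.mono_set (hsub s hsT)) hgint
        fun r _ => hptbnd a ha r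
    have h2 : (∫ r in (0:ℝ)..s, (a * exp (r/ε) + (exp (-r/ε) * ‖u'' r‖ ^ 2) / a) / 2)
        = ((a * ∫ r in (0:ℝ)..s, exp (r/ε))
            + (∫ r in (0:ℝ)..s, exp (-r/ε) * ‖u'' r‖ ^ 2) / a) / 2 := by
      rw [intervalIntegral.integral_div,
        intervalIntegral.integral_add ((hdomc.intervalIntegrable 0 s).const_mul a)
          (hgint2.div_const a),
        intervalIntegral.integral_const_mul, intervalIntegral.integral_div]
    have h3 : (∫ r in (0:ℝ)..s, exp (r/ε)) ≤ s * exp (t/ε) := by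
      have hb : (∫ r in (0:ℝ)..s, exp (r/ε)) ≤ ∫ _ in (0:ℝ)..s, exp (t/ε) := by
        refine intervalIntegral.integral_mono_on hs.1 (hdomc.intervalIntegrable 0 s)
          intervalIntegrable_const fun r hr => ?_
        exact exp_le_exp.mpr (by gcongr; exact hr.2.trans hs.2)
      simpa using hb
    have h4 : (∫ r in (0:ℝ)..s, exp (-r/ε) * ‖u'' r‖ ^ 2) ≤ I := by
      have hsubr : Set.uIcc s T ⊆ Set.uIcc (0:ℝ) T := by
        rw [Set.uIcc_of_le hsT.2, Set.uIcc_of_le hT.le]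
        exact Set.Icc_subset_Icc hsT.1 le_rfl
      have hadj := intervalIntegral.integral_add_adjacent_intervals hgint2
        (hint.mono_set hsubr)
      have hnn : 0 ≤ ∫ r in s..T, exp (-r/ε) * ‖u'' r‖ ^ 2 :=
        intervalIntegral.integral_nonneg hsT.2 fun r _ => by positivity
      rw [← hIdef] at *
      linarith [hadj]
    calc (∫ r in (0:ℝ)..s, ‖u'' r‖)
        ≤ ((a * ∫ r in (0:ℝ)..s, exp (r/ε))
            + (∫ r in (0:ℝ)..s, exp (-r/ε) * ‖u'' r‖ ^ 2) / a) / 2 := h2 ▸ h1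
      _ ≤ (a * (s * exp (t/ε)) + I / a) / 2 := by gcongr
  -- key pointwise bound
  have key : ∀ t ∈ Set.Icc (0:ℝ) T,
      ‖u t‖ ≤ 2/3 * (t * Real.sqrt t) * Real.sqrt (exp (t/ε) * I) := by
    intro t ht
    calc ‖u t‖ = ‖∫ s in (0:ℝ)..t, ∫ r in (0:ℝ)..s, u'' r‖ := by rw [hftc t ht]
      _ ≤ ∫ s in (0:ℝ)..t, ‖∫ r in (0:ℝ)..s, u'' r‖ :=
          intervalIntegral.norm_integral_le_integral_norm ht.1
      _ ≤ ∫ s in (0:ℝ)..t, Real.sqrt s * Real.sqrt (exp (t/ε) * I) := by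
          refine intervalIntegral.integral_mono_on ht.1 ?_
            ((Real.continuous_sqrt.mul continuous_const).intervalIntegrable 0 t)
            fun s hs => ?_
          · exact (((intervalIntegral.continuousOn_primitive_interval' hu''int
               Set.left_mem_uIcc).mono (hsub t ht)).norm).intervalIntegrable
          · calc ‖∫ r in (0:ℝ)..s, u'' r‖ ≤ ∫ r in (0:ℝ)..s, ‖u'' r‖ :=
                intervalIntegral.norm_integral_le_integral_norm hs.1
              _ ≤ Real.sqrt ((s * exp (t/ε)) * I) := stepA t ht s hs
              _ = Real.sqrt s * Real.sqrt (exp (t/ε) * I) := by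
                  rw [mul_assoc, Real.sqrt_mul hs.1]
      _ = 2/3 * (t * Real.sqrt t) * Real.sqrt (exp (t/ε) * I) := by
          rw [intervalIntegral.integral_mul_const, integral_sqrt'' ht.1]
  have key2 : ∀ t ∈ Set.Icc (0:ℝ) T, exp (-t/ε) * ‖u t‖ ^ 2 ≤ 4/9 * t ^ 3 * I := by
    intro t ht
    have h := key t ht
    have hEI : 0 ≤ exp (t/ε) * I := mul_nonneg (exp_pos _).le hInn
    have h2 : ‖u t‖ ^ 2 ≤ (2/3 * (t * Real.sqrt t) * Real.sqrt (exp (t/ε) * I)) ^ 2 :=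
      pow_le_pow_left₀ (norm_nonneg _) h 2
    have hx : (2/3 * (t * Real.sqrt t) * Real.sqrt (exp (t/ε) * I)) ^ 2
        = 4/9 * t ^ 3 * (exp (t/ε) * I) := by
      rw [mul_pow, mul_pow, Real.sq_sqrt hEI, mul_pow, Real.sq_sqrt ht.1]
      ring
    have h3 := mul_le_mul_of_nonneg_left (h2.trans_eq hx) (exp_pos (-t/ε)).le
    have hEE : exp (-t/ε) * exp (t/ε) = 1 := by
      rw [← Real.exp_add]; ring_nf; exact Real.exp_zero
    calc exp (-t/ε) * ‖u t‖ ^ 2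
        ≤ exp (-t/ε) * (4/9 * t ^ 3 * (exp (t/ε) * I)) := h3
      _ = 4/9 * t ^ 3 * I * (exp (-t/ε) * exp (t/ε)) := by ring
      _ = 4/9 * t ^ 3 * I := by rw [hEE, mul_one]
  constructor
  · have h5 : (∫ t in (0:ℝ)..T, exp (-t/ε) * ‖u t‖ ^ 2)
        ≤ ∫ t in (0:ℝ)..T, 4/9 * I * t ^ 3 := by
      refine intervalIntegral.integral_mono_on hT.le hintu
        ((continuous_const.mul (continuous_pow 3)).intervalIntegrable 0 T)
        fun t ht => ?_
      calc exp (-t/ε) * ‖u t‖ ^ 2 ≤ 4/9 * t ^ 3 * I := key2 t ht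
        _ = 4/9 * I * t ^ 3 := by ring
    have h6 : (∫ t in (0:ℝ)..T, 4/9 * I * t ^ 3) = 4/9 * I * (T ^ 4 / 4) := by
      rw [intervalIntegral.integral_const_mul, integral_pow]
      norm_num
    have h7 : 4/9 * I * (T ^ 4 / 4) ≤ T ^ 4 / 8 * I := by
      nlinarith [mul_nonneg (pow_nonneg hT.le 4) hInn]
    linarith [h5, h6 ▸ h5]
  · intro h0 t ht
    have h := key t ht
    rw [h0] at h
    simp only [mul_zero, Real.sqrt_zero] at h
    have : ‖u t‖ ≤ 0 := by linarith
    simpa using le_antisymm this (norm_nonneg _)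
end
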